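/- The projected Hessian N^T H N ∈ ℝ^{T·n_x × T·n_x} is symmetric positive definite (its full rank is guaranteed by the terms B^T Q B coming from the positive definite state-cost blocks, even though the control-cost blocks U are only assumed positive semidefinite). -/

import Mathlib

open Matrix

/-- The sparse null-space basis `N ∈ ℝ^{2T·n_x × T·n_x}`, viewed block-wise.
Variables are ordered as `(u(0), x(1), u(1), x(2), …, u(T−1), x(T))`: row block
`(s, 0)` corresponds to `u(s)` and `(s, 1)` corresponds to `x(s+1)`.
Column block `k` has `I` in the `u(k)` row block `(k, 0)`, `B` in the `x(k+1)` row
block `(k, 1)`, and (for `k ≤ T−2`) `C = −B⁻¹AB` in the `u(k+1)` row block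
`(k+1, 0)`; all other blocks are zero. -/
noncomputable def NMat (T nx : ℕ) (A B : Matrix (Fin nx) (Fin nx) ℝ) :
    Matrix ((Fin T × Fin 2) × Fin nx) (Fin T × Fin nx) ℝ :=
  fun p q =>
    (if p.1.1 = q.1 ∧ p.1.2 = 0 then (1 : Matrix (Fin nx) (Fin nx) ℝ) p.2 q.2 else 0) +
    (if p.1.1 = q.1 ∧ p.1.2 = 1 then B p.2 q.2 else 0) +
    (if ((p.1.1 : ℕ) = (q.1 : ℕ) + 1) ∧ p.1.2 = 0 then (-(B⁻¹ * A * B)) p.2 q.2 else 0)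

/-- The block-diagonal Hessian `H ∈ ℝ^{2T·n_x × 2T·n_x}` with `U` on every `u(k)`
diagonal block `(k, 0)`, `Q` on every `x(k)` diagonal block for `k = 1,…,T−1`
(row blocks `(k, 1)` with `k ≤ T−2`), and `Q_f` on the `x(T)` diagonal block
`(T−1, 1)`; all off-diagonal blocks are zero. -/
noncomputable def HMat (T nx : ℕ) (U Q Qf : Matrix (Fin nx) (Fin nx) ℝ) :
    Matrix ((Fin T × Fin 2) × Fin nx) ((Fin T × Fin 2) × Fin nx) ℝ :=
  fun p q =>
    if p.1 = q.1 then
      (if p.1.2 = 0 then U p.2 q.2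
       else if (p.1.1 : ℕ) = T - 1 then Qf p.2 q.2 else Q p.2 q.2)
    else 0

/-- The projected Hessian `Nᵀ H N ∈ ℝ^{T·n_x × T·n_x}` is symmetric
positive definite (its full rank is guaranteed by the terms `Bᵀ Q B` coming from the
positive definite state-cost blocks, even though the control-cost block `U` is only
assumed positive semidefinite). -/
theorem NHN_posDef (T nx : ℕ) (hT : 1 ≤ T) (hnx : 1 ≤ nx)
    (A B : Matrix (Fin nx) (Fin nx) ℝ) (hB : IsUnit B)
    (U Q Qf : Matrix (Fin nx) (Fin nx) ℝ)
    (hU : U.PosSemidef) (hQ : Q.PosDef) (hQf : Qf.PosDef) :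
    ((NMat T nx A B)ᵀ * HMat T nx U Q Qf * NMat T nx A B).PosDef := by
  classical
  set N := NMat T nx A B with hN
  set H := HMat T nx U Q Qf with hH
  have hHherm : H.IsHermitian := by
    ext p q
    simp only [conjTranspose_apply, hH, HMat, star_trivial]
    by_cases h1 : p.1 = q.1
    · rw [if_pos h1, if_pos h1.symm, h1]
      by_cases h2 : q.1.2 = 0
      · rw [if_pos h2, if_pos h2]
        have := congrFun (congrFun hU.1 p.2) q.2
        simpa [conjTranspose_apply] using this
      · rw [if_neg h2, if_neg h2]
        by_cases h3 : (q.1.1 : ℕ) = T - 1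
        · rw [if_pos h3, if_pos h3]
          have := congrFun (congrFun hQf.1 p.2) q.2
          simpa [conjTranspose_apply] using this
        · rw [if_neg h3, if_neg h3]
          have := congrFun (congrFun hQ.1 p.2) q.2
          simpa [conjTranspose_apply] using this
    · rw [if_neg h1, if_neg (fun h => h1 h.symm)]
  rw [posDef_iff_dotProduct_mulVec]
  constructor
  · have := isHermitian_conjTranspose_mul_mul N hHherm
    simpa [conjTranspose_eq_transpose_of_trivial] using this
  · intro x hx
    rw [star_trivial, ← mulVec_mulVec, ← mulVec_mulVec, dotProduct_mulVec, vecMul_transpose]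
    set y := N *ᵥ x with hy
    -- block function of the Hessian
    set M : Fin T × Fin 2 → Matrix (Fin nx) (Fin nx) ℝ :=
      fun c => if c.2 = 0 then U else if (c.1 : ℕ) = T - 1 then Qf else Q with hM
    have hMps : ∀ c, (M c).PosSemidef := by
      intro c
      simp only [hM]
      split
      · exact hU
      · split
        · exact hQf.posSemidef
        · exact hQ.posSemidef
    -- the value of H *ᵥ y on a block
    have hHy : ∀ (c : Fin T × Fin 2) (i : Fin nx),
        (H *ᵥ y) (c, i) = ∑ j, M c i j * y (c, j) := by
      intro c i
      simp only [mulVec, dotProduct, hH, HMat, hM]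
      rw [Fintype.sum_prod_type]
      rw [Finset.sum_eq_single c]
      · simp
        split_ifs <;> rfl
      · intro b _ hb
        simp [Ne.symm hb]
      · simp
    -- split the quadratic form
    have hsplit : y ⬝ᵥ (H *ᵥ y) =
        ∑ c : Fin T × Fin 2, (fun i => y (c, i)) ⬝ᵥ (M c *ᵥ fun i => y (c, i)) := by
      simp only [dotProduct]
      rw [Fintype.sum_prod_type]
      refine Finset.sum_congr rfl fun c _ => Finset.sum_congr rfl fun i _ => ?_
      rw [hHy c i]
      simp [mulVec, dotProduct]
    rw [hsplit]
    -- the x-row blocks of y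
    have hy1 : ∀ (k : Fin T), (fun i => y ((k, 1), i)) = B *ᵥ (fun j => x (k, j)) := by
      intro k
      funext i
      simp only [hy, hN, NMat, mulVec, dotProduct]
      rw [Fintype.sum_prod_type]
      rw [Finset.sum_eq_single k]
      · simp
      · intro b _ hb
        simp [hb, Ne.symm hb]
      · simp
    -- find a nonzero block of x
    obtain ⟨q, hq⟩ := Function.ne_iff.mp hx
    have hxq : (fun j => x (q.1, j)) ≠ 0 := by
      intro h
      exact hq (by simpa using congrFun h q.2)
    have hBdet : IsUnit B.det := (Matrix.isUnit_iff_isUnit_det B).mp hB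
    have hvne : (fun i => y ((q.1, 1), i)) ≠ 0 := by
      rw [hy1]
      intro h
      apply hxq
      have := congrArg (fun v => B⁻¹ *ᵥ v) h
      simpa [mulVec_mulVec, Matrix.nonsing_inv_mul B hBdet] using this
    refine Finset.sum_pos' (fun c _ => ?_) ⟨(q.1, 1), Finset.mem_univ _, ?_⟩
    · have := (hMps c).dotProduct_mulVec_nonneg (fun i => y (c, i))
      simpa using this
    · have hpd : (M (q.1, 1)).PosDef := by
        simp only [hM]
        norm_num
        split
        · exact hQf
        · exact hQ
      have := hpd.dotProduct_mulVec_pos hvne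
      simpa using this
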